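/- arXiv:2306.16091 — 2 statements merged into one kernel-verified Lean document; each statement's English description precedes it below -/
import Mathlib

section
/- Let H : [0,1] → (0,1) be Lipschitz continuous with H̲ = min_{t ∈ [0,1]} H_t, and let D : [0,1] → ℝ be measurable with 0 < D̲ ≤ D(t) ≤ D̄ < ∞ for all t. Define I(h) = ∫₀¹ D(t) h^{2H_t} dt for h ∈ (0,1). Then I(h) ≤ D̄ h^{2H̲} for every h ∈ (0,1), and there exist a constant C̲ > 0 and h₀ ∈ (0,1) such that I(h) ≥ C̲ h^{2H̲} / log(1/h) for every h ∈ (0, h₀]. -/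
open MeasureTheory Set

/-- bounds on `I(h) = ∫₀¹ D(t) h^{2H_t} dt` for a Lipschitz exponent
function `H : [0,1] → (0,1)` attaining its minimum `Hlo`, and a measurable
function `D` bounded between `Dlo > 0` and `Dhi`. -/
theorem stmt2 (H D : ℝ → ℝ) (κ : NNReal)
    (hHlip : LipschitzOnWith κ H (Icc (0:ℝ) 1))
    (hH01 : ∀ t ∈ Icc (0:ℝ) 1, 0 < H t ∧ H t < 1)
    (Hlo : ℝ) (hHlo : ∀ t ∈ Icc (0:ℝ) 1, Hlo ≤ H t)
    (hHloAtt : ∃ t ∈ Icc (0:ℝ) 1, H t = Hlo)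
    (hDmeas : Measurable D) (Dlo Dhi : ℝ) (hDlo : 0 < Dlo)
    (hDb : ∀ t ∈ Icc (0:ℝ) 1, Dlo ≤ D t ∧ D t ≤ Dhi) :
    (∀ h ∈ Ioo (0:ℝ) 1,
      (∫ t in Icc (0:ℝ) 1, D t * h ^ (2 * H t)) ≤ Dhi * h ^ (2 * Hlo)) ∧
    (∃ C > (0:ℝ), ∃ h₀ ∈ Ioo (0:ℝ) 1, ∀ h ∈ Ioc (0:ℝ) h₀,
      C * h ^ (2 * Hlo) / Real.log (1 / h) ≤
        ∫ t in Icc (0:ℝ) 1, D t * h ^ (2 * H t)) := by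
  obtain ⟨t₀, ht₀, hHt₀⟩ := hHloAtt
  have hHlo0 : 0 < Hlo := hHt₀ ▸ (hH01 t₀ ht₀).1
  have hDhi : Dlo ≤ Dhi := le_trans (hDb t₀ ht₀).1 (hDb t₀ ht₀).2
  -- measurability of the integrand
  have haesm : ∀ h : ℝ, 0 < h → AEStronglyMeasurable (fun t => D t * h ^ (2 * H t))
      (volume.restrict (Icc (0:ℝ) 1)) := by
    intro h hh
    have hc : Continuous fun x : ℝ => h ^ x := by
      have : (fun x : ℝ => h ^ x) = fun x => Real.exp (Real.log h * x) := by
        funext x; rw [Real.rpow_def_of_pos hh]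
      rw [this]
      exact Real.continuous_exp.comp (continuous_const.mul continuous_id)
    have hHc : ContinuousOn H (Icc (0:ℝ) 1) := hHlip.continuousOn
    have h2 : ContinuousOn (fun t => h ^ (2 * H t)) (Icc (0:ℝ) 1) :=
      hc.comp_continuousOn (continuousOn_const.mul hHc)
    exact hDmeas.aestronglyMeasurable.mul
      (h2.aestronglyMeasurable measurableSet_Icc)
  -- integrability
  have hint : ∀ h : ℝ, 0 < h → h < 1 →
      IntegrableOn (fun t => D t * h ^ (2 * H t)) (Icc (0:ℝ) 1) := by
    intro h hh hh1
    refine ⟨haesm h hh, ?_⟩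
    refine HasFiniteIntegral.restrict_of_bounded (C := |Dhi|)
      (by simp [Real.volume_Icc] : volume (Icc (0:ℝ) 1) < ⊤) ?_
    filter_upwards [ae_restrict_mem measurableSet_Icc] with t ht
    have h1 : 0 < h ^ (2 * H t) := Real.rpow_pos_of_pos hh _
    have h2 : h ^ (2 * H t) ≤ 1 := by
      apply Real.rpow_le_one hh.le hh1.le
      linarith [(hH01 t ht).1]
    have hD := hDb t ht
    have hDpos : 0 < D t := lt_of_lt_of_le hDlo hD.1
    rw [Real.norm_eq_abs, abs_of_nonneg (by positivity)]
    calc D t * h ^ (2 * H t) ≤ D t * 1 := by nlinarith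
      _ ≤ |Dhi| := by rw [mul_one]; exact le_trans hD.2 (le_abs_self _)
  constructor
  · -- upper bound
    intro h hh
    obtain ⟨hh0, hh1⟩ := hh
    have := setIntegral_mono_on (μ := volume) (hint h hh0 hh1)
      ((integrableOn_const_iff).mpr (Or.inr (by simp [Real.volume_Icc])))
      measurableSet_Icc
      (f := fun t => D t * h ^ (2 * H t)) (g := fun _ => Dhi * h ^ (2 * Hlo)) ?_
    · calc _ ≤ ∫ _ in Icc (0:ℝ) 1, Dhi * h ^ (2 * Hlo) := this
        _ = Dhi * h ^ (2 * Hlo) := by simp [Real.volume_Icc]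
    · intro t ht
      have hD := hDb t ht
      have hr : h ^ (2 * H t) ≤ h ^ (2 * Hlo) :=
        Real.rpow_le_rpow_of_exponent_ge hh0 hh1.le
          (by linarith [hHlo t ht])
      have h1 : 0 < h ^ (2 * H t) := Real.rpow_pos_of_pos hh0 _
      have hDhi0 : 0 ≤ Dhi := le_trans hDlo.le hDhi
      calc D t * h ^ (2 * H t) ≤ Dhi * h ^ (2 * H t) :=
            mul_le_mul_of_nonneg_right hD.2 h1.le
        _ ≤ Dhi * h ^ (2 * Hlo) := mul_le_mul_of_nonneg_left hr hDhi0
  · -- lower bound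
    set K : ℝ := (κ : ℝ) + 1 with hKdef
    have hK1 : (1:ℝ) ≤ K := by rw [hKdef]; have := NNReal.coe_nonneg κ; linarith
    have hK0 : (0:ℝ) < K := by positivity
    refine ⟨Dlo * Real.exp (-1) / (2 * K), by positivity, Real.exp (-1),
      ⟨Real.exp_pos _, by
        have := Real.exp_lt_one_iff.mpr (show (-1:ℝ) < 0 by norm_num); exact this⟩, ?_⟩
    intro h hh
    obtain ⟨hh0, hhle⟩ := hh
    have hh1 : h < 1 := lt_of_le_of_lt hhle (Real.exp_lt_one_iff.mpr (by norm_num))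
    set L : ℝ := Real.log (1 / h) with hLdef
    have hLlog : L = - Real.log h := by rw [hLdef, one_div, Real.log_inv]
    have hL1 : 1 ≤ L := by
      rw [hLlog]
      have : Real.log h ≤ Real.log (Real.exp (-1)) := Real.log_le_log hh0 hhle
      rw [Real.log_exp] at this; linarith
    have hL0 : 0 < L := lt_of_lt_of_le one_pos hL1
    set δ : ℝ := 1 / (2 * K * L) with hδdef
    have hδ0 : 0 < δ := by positivity
    have hδhalf : δ ≤ 1 / 2 := by
      rw [hδdef, div_le_div_iff₀ (by positivity) (by norm_num)]
      nlinarith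
    set a : ℝ := min t₀ (1 - δ) with hadef
    have ht₀0 : 0 ≤ t₀ := ht₀.1
    have ht₀1 : t₀ ≤ 1 := ht₀.2
    have ha0 : 0 ≤ a := le_min ht₀0 (by linarith)
    have ha1 : a + δ ≤ 1 := by
      cases le_total t₀ (1 - δ) with
      | inl hle => rw [hadef, min_eq_left hle]; linarith
      | inr hle => rw [hadef, min_eq_right hle]; linarith
    have hJsub : Icc a (a + δ) ⊆ Icc (0:ℝ) 1 := fun t ht =>
      ⟨le_trans ha0 ht.1, le_trans ht.2 ha1⟩
    -- distance bound on J
    have hdist : ∀ t ∈ Icc a (a + δ), |t - t₀| ≤ δ := by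
      intro t ht
      have h1 : a ≤ t₀ := min_le_left _ _
      have h2 : t₀ - δ ≤ a := by
        cases le_total t₀ (1 - δ) with
        | inl hle => rw [hadef, min_eq_left hle]; linarith
        | inr hle => rw [hadef, min_eq_right hle]; linarith
      rw [abs_le]; exact ⟨by linarith [ht.1], by linarith [ht.2]⟩
    -- pointwise lower bound on J
    have hpt : ∀ t ∈ Icc a (a + δ),
        Dlo * (h ^ (2 * Hlo) * Real.exp (-1)) ≤ D t * h ^ (2 * H t) := by
      intro t ht
      have htI : t ∈ Icc (0:ℝ) 1 := hJsub ht
      have hHub : H t ≤ Hlo + K * δ := by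
        have hlip := hHlip.dist_le_mul t htI t₀ ht₀
        rw [Real.dist_eq, Real.dist_eq] at hlip
        have h1 : |H t - H t₀| ≤ (κ : ℝ) * δ :=
          le_trans hlip (mul_le_mul_of_nonneg_left (hdist t ht) (NNReal.coe_nonneg κ))
        have h2 : (κ : ℝ) * δ ≤ K * δ := by
          apply mul_le_mul_of_nonneg_right _ hδ0.le
          rw [hKdef]; have := NNReal.coe_nonneg κ; linarith
        have := (abs_le.mp h1).2
        rw [hHt₀] at this; linarith
      have hr1 : h ^ (2 * Hlo + 2 * K * δ) ≤ h ^ (2 * H t) :=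
        Real.rpow_le_rpow_of_exponent_ge hh0 hh1.le (by linarith)
      have hlogh : Real.log h = -L := by rw [hLlog]; ring
      have hsplit : h ^ (2 * Hlo + 2 * K * δ)
          = h ^ (2 * Hlo) * Real.exp (-1) := by
        rw [Real.rpow_add hh0]
        congr 1
        rw [Real.rpow_def_of_pos hh0, hlogh, hδdef]
        congr 1
        field_simp
      have hD := (hDb t htI).1
      have hpos : 0 < h ^ (2 * Hlo) * Real.exp (-1) := by positivity
      calc Dlo * (h ^ (2 * Hlo) * Real.exp (-1))
          ≤ D t * (h ^ (2 * Hlo) * Real.exp (-1)) :=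
            mul_le_mul_of_nonneg_right hD hpos.le
        _ = D t * h ^ (2 * Hlo + 2 * K * δ) := by rw [hsplit]
        _ ≤ D t * h ^ (2 * H t) :=
            mul_le_mul_of_nonneg_left hr1 (by linarith [hDlo])
    -- put it together
    have hintfull := hint h hh0 hh1
    have hintJ : IntegrableOn (fun t => D t * h ^ (2 * H t)) (Icc a (a + δ)) :=
      hintfull.mono_set hJsub
    have hnonneg : 0 ≤ᵐ[volume.restrict (Icc (0:ℝ) 1)]
        fun t => D t * h ^ (2 * H t) := by
      filter_upwards [ae_restrict_mem measurableSet_Icc] with t ht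
      have := (hDb t ht).1
      have : 0 < D t := lt_of_lt_of_le hDlo this
      positivity
    have step1 : (∫ t in Icc a (a + δ), D t * h ^ (2 * H t))
        ≤ ∫ t in Icc (0:ℝ) 1, D t * h ^ (2 * H t) :=
      setIntegral_mono_set hintfull hnonneg (HasSubset.Subset.eventuallyLE hJsub)
    have step2 : Dlo * (h ^ (2 * Hlo) * Real.exp (-1)) * δ
        ≤ ∫ t in Icc a (a + δ), D t * h ^ (2 * H t) := by
      have := setIntegral_mono_on (μ := volume)
        ((integrableOn_const_iff).mpr (Or.inr (by simp [Real.volume_Icc])))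
        hintJ measurableSet_Icc hpt
      calc Dlo * (h ^ (2 * Hlo) * Real.exp (-1)) * δ
          = ∫ _ in Icc a (a + δ), Dlo * (h ^ (2 * Hlo) * Real.exp (-1)) := by
            simp [Real.volume_Icc, hδ0.le]
            ring
        _ ≤ _ := this
    have heq : Dlo * Real.exp (-1) / (2 * K) * h ^ (2 * Hlo) / L
        = Dlo * (h ^ (2 * Hlo) * Real.exp (-1)) * δ := by
      rw [hδdef]; field_simp
    rw [hLdef] at heq ⊢
    linarith [step1, step2, heq.le]
end

section
/- Under the independent-design assumptions, there exist constants 0 < b̲ ≤ b̄ < ∞, depending only on C_{f,L}, C_{f,U} and C_𝔪, such that for every N ≥ 1, every m ≥ 1, every h ∈ (0,1] and every t ∈ [0,1]: b̲ · N · min{1, m h} ≤ E[𝒲_N(t;h)] ≤ b̄ · N · min{1, m h}. -/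
open MeasureTheory Set

open Classical in
/-- Selection indicator `w_i(t;h)`: equals `1` if at least one of the
sampling points `T_1^{(i)}, …, T_{M_i}^{(i)}` lies within distance `h` of `t`. -/
noncomputable def wInd {Ω : Type} (M : ℕ → ℕ) (T : ℕ → ℕ → Ω → ℝ)
    (i : ℕ) (t h : ℝ) (ω : Ω) : ℝ :=
  if ∃ m < M i, |T i m ω - t| ≤ h then 1 else 0

/-- `𝒲_N(t;h) = Σ_{i<N} w_i(t;h)`. -/
noncomputable def WNone {Ω : Type} (M : ℕ → ℕ) (T : ℕ → ℕ → Ω → ℝ)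
    (N : ℕ) (t h : ℝ) (ω : Ω) : ℝ :=
  ∑ i ∈ Finset.range N, wInd M T i t h ω

/-- `𝒲_N(s,t;h) = Σ_{i<N} w_i(s;h) w_i(t;h)`. -/
noncomputable def WNtwo {Ω : Type} (M : ℕ → ℕ) (T : ℕ → ℕ → Ω → ℝ)
    (N : ℕ) (s t h : ℝ) (ω : Ω) : ℝ :=
  ∑ i ∈ Finset.range N, wInd M T i s h ω * wInd M T i t h ω

/-- The independent-design assumptions: the numbers of points `M_i` are
comparable to `m` up to the factor `C𝔪`, and the sampling points `T_m^{(i)}`,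
`m < M_i`, `i < N`, are independent random variables with common density `f`
supported in `[0,1]` and bounded between `CfL` and `CfU`. -/
def IndepDesign (Ω : Type) [MeasureSpace Ω] (f : ℝ → ℝ) (M : ℕ → ℕ)
    (T : ℕ → ℕ → Ω → ℝ) (N m : ℕ) (CfL CfU C𝔪 : ℝ) : Prop :=
  IsProbabilityMeasure (volume : Measure Ω) ∧
  (∀ i < N, 0 < M i) ∧
  (∀ i < N, (m : ℝ) / C𝔪 ≤ (M i : ℝ) ∧ (M i : ℝ) ≤ C𝔪 * m) ∧
  Measurable f ∧
  (∀ t ∈ Icc (0:ℝ) 1, CfL ≤ f t ∧ f t ≤ CfU) ∧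
  (∀ t, t ∉ Icc (0:ℝ) 1 → f t = 0) ∧
  (∀ i mm, Measurable (T i mm)) ∧
  (∀ i < N, ∀ mm < M i,
    Measure.map (T i mm) volume =
      MeasureTheory.volume.withDensity (fun t => ENNReal.ofReal (f t))) ∧
  ProbabilityTheory.iIndepFun
    (fun p : {q : ℕ × ℕ // q.1 < N ∧ q.2 < M q.1} => T p.1.1 p.1.2) volume

section Auxiliary

open scoped ENNReal

/-! ### Elementary real inequalities -/

lemma stmt8_aux_upper (p : ℝ) (K : ℕ) (hp0 : 0 ≤ p) (hp1 : p ≤ 1) :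
    1 - (1-p)^K ≤ min 1 (K * p) := by
  refine le_min (by nlinarith [pow_nonneg (by linarith : (0:ℝ) ≤ 1-p) K]) ?_
  have h := one_add_mul_le_pow (by linarith : (-2:ℝ) ≤ -p) K
  have h2 : (1 + -p : ℝ) = 1 - p := by ring
  rw [h2] at h
  linarith

lemma stmt8_aux_lower (p : ℝ) (K : ℕ) (hp0 : 0 ≤ p) (hp1 : p ≤ 1) :
    (1/2) * min 1 (K * p) ≤ 1 - (1-p)^K := by
  set q : ℝ := (1-p)^K with hq_def
  have hq0 : 0 ≤ q := pow_nonneg (by linarith) K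
  have hB : 1 + (K:ℝ) * p ≤ (1+p)^K := one_add_mul_le_pow (by linarith) K
  have hprod : (1+p)^K * q ≤ 1 := by
    rw [hq_def, ← mul_pow]
    exact pow_le_one₀ (by nlinarith) (by nlinarith)
  have key : (1 + (K:ℝ)*p) * q ≤ 1 := le_trans (mul_le_mul_of_nonneg_right hB hq0) hprod
  have hx0 : 0 ≤ (K:ℝ) * p := mul_nonneg (Nat.cast_nonneg K) hp0
  rcases le_total ((K:ℝ) * p) 1 with hx | hx
  · rw [min_eq_right hx]
    nlinarith [key, hq0, hx0]
  · rw [min_eq_left hx]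
    nlinarith [key, hq0]

lemma stmt8_min_mul_upper (c x : ℝ) (hc : 0 ≤ c) (hx : 0 ≤ x) :
    min 1 (c*x) ≤ max 1 c * min 1 x := by
  rcases le_total x 1 with h | h
  · rw [min_eq_right h]
    calc min 1 (c*x) ≤ c*x := min_le_right _ _
    _ ≤ max 1 c * x := by gcongr; exact le_max_right _ _
  · rw [min_eq_left h]
    have h1 : (1:ℝ) ≤ max 1 c := le_max_left _ _
    nlinarith [min_le_left (1:ℝ) (c*x)]

lemma stmt8_min_mul_lower (c x : ℝ) (hc : 0 ≤ c) (hx : 0 ≤ x) :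
    min 1 c * min 1 x ≤ min 1 (c*x) := by
  refine le_min ?_ ?_
  · have := mul_le_mul (min_le_left 1 c) (min_le_left 1 x) (le_min zero_le_one hx) zero_le_one
    simpa using this
  · exact mul_le_mul (min_le_right _ _) (min_le_right _ _) (le_min zero_le_one hx) hc

/-! ### Expectation of a single selection indicator -/

lemma stmt8_wInd_eq_indicator {Ω : Type} (M : ℕ → ℕ) (T : ℕ → ℕ → Ω → ℝ)
    (i : ℕ) (t h : ℝ) :
    wInd M T i t h =
      Set.indicator (⋃ mm ∈ Finset.range (M i), T i mm ⁻¹' Icc (t-h) (t+h))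
        (fun _ => (1:ℝ)) := by
  funext ω
  have hmemE : (ω ∈ ⋃ mm ∈ Finset.range (M i), T i mm ⁻¹' Icc (t-h) (t+h)) ↔
      ∃ mm < M i, |T i mm ω - t| ≤ h := by
    simp only [mem_iUnion, Finset.mem_range, mem_preimage, mem_Icc]
    constructor
    · rintro ⟨mm, hmm, h1, h2⟩
      exact ⟨mm, hmm, by rw [abs_le]; constructor <;> linarith⟩
    · rintro ⟨mm, hmm, hx⟩
      rw [abs_le] at hx
      exact ⟨mm, hmm, by constructor <;> linarith [hx.1, hx.2]⟩
  by_cases hc : ∃ mm < M i, |T i mm ω - t| ≤ h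
  · rw [wInd, if_pos hc, Set.indicator_of_mem (hmemE.2 hc)]
  · rw [wInd, if_neg hc, Set.indicator_of_notMem (fun hm => hc (hmemE.1 hm))]

lemma stmt8_wInd_integrable {Ω : Type} [MeasureSpace Ω]
    [IsFiniteMeasure (volume : Measure Ω)]
    (M : ℕ → ℕ) (T : ℕ → ℕ → Ω → ℝ) (hT : ∀ i mm, Measurable (T i mm))
    (i : ℕ) (t h : ℝ) :
    Integrable (wInd M T i t h) := by
  rw [stmt8_wInd_eq_indicator]
  have hE : MeasurableSet (⋃ mm ∈ Finset.range (M i), T i mm ⁻¹' Icc (t-h) (t+h)) :=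
    (Finset.range (M i)).measurableSet_biUnion (fun mm _ => hT i mm measurableSet_Icc)
  exact (integrable_indicator_iff hE).2 (integrableOn_const (measure_ne_top _ _))

lemma stmt8_expectation_wInd {Ω : Type} [MeasureSpace Ω]
    (f : ℝ → ℝ) (M : ℕ → ℕ) (T : ℕ → ℕ → Ω → ℝ) (N m : ℕ)
    (CfL CfU C𝔪 : ℝ)
    (hd : IndepDesign Ω f M T N m CfL CfU C𝔪)
    (i : ℕ) (hi : i < N) (t h : ℝ) :
    ∫ ω, wInd M T i t h ω =
      1 - (1 - ((volume.withDensity fun x => ENNReal.ofReal (f x))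
            (Icc (t-h) (t+h))).toReal) ^ (M i) := by
  obtain ⟨hprob, hMpos, hMbd, hfmeas, hfbd, hfsupp, hTmeas, hTmap, hindep⟩ := hd
  haveI := hprob
  set S : Set ℝ := Icc (t-h) (t+h) with hS_def
  have hS : MeasurableSet S := measurableSet_Icc
  set ν := volume.withDensity (fun x => ENNReal.ofReal (f x)) with hν_def
  set P : ℝ≥0∞ := ν S with hP_def
  have hPm : ∀ mm < M i, volume (T i mm ⁻¹' S) = P := by
    intro mm hm
    rw [← Measure.map_apply (hTmeas i mm) hS, hTmap i hi mm hm]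
  haveI hν1 : IsProbabilityMeasure ν := by
    rw [← hTmap i hi 0 (hMpos i hi)]
    exact Measure.isProbabilityMeasure_map (hTmeas i 0).aemeasurable
  have hP1 : P ≤ 1 := by
    have := measure_mono (μ := ν) (subset_univ S)
    simpa [measure_univ] using this
  set E : Set Ω := ⋃ mm ∈ Finset.range (M i), T i mm ⁻¹' S with hE_def
  have hE : MeasurableSet E :=
    (Finset.range (M i)).measurableSet_biUnion (fun mm _ => hTmeas i mm hS)
  have hmemS : ∀ x : ℝ, |x - t| ≤ h ↔ x ∈ S := by
    intro x
    rw [abs_le, hS_def, mem_Icc]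
    constructor <;> (rintro ⟨h1, h2⟩; constructor <;> linarith)
  have hmemE : ∀ ω, ω ∈ E ↔ ∃ mm < M i, |T i mm ω - t| ≤ h := by
    intro ω
    simp only [hE_def, mem_iUnion, Finset.mem_range, mem_preimage]
    constructor
    · rintro ⟨mm, hmm, hx⟩; exact ⟨mm, hmm, (hmemS _).2 hx⟩
    · rintro ⟨mm, hmm, hx⟩; exact ⟨mm, hmm, (hmemS _).1 hx⟩
  have hw : wInd M T i t h = E.indicator (fun _ => (1:ℝ)) := by
    funext ω
    by_cases hc : ∃ mm < M i, |T i mm ω - t| ≤ h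
    · rw [wInd, if_pos hc, Set.indicator_of_mem ((hmemE ω).2 hc)]
    · rw [wInd, if_neg hc, Set.indicator_of_notMem (fun hm => hc ((hmemE ω).1 hm))]
  -- independence: measure of the complement
  have hEc : volume Eᶜ = (1 - P) ^ (M i) := by
    classical
    set ι := {q : ℕ × ℕ // q.1 < N ∧ q.2 < M q.1} with hι_def
    set emb : {mm // mm ∈ Finset.range (M i)} ↪ ι :=
      ⟨fun mm => ⟨(i, mm.1), ⟨hi, Finset.mem_range.mp mm.2⟩⟩, by
        intro a b hab
        apply Subtype.ext
        exact congrArg (fun q : ι => q.1.2) hab⟩ with hemb_def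
    set Fs : Finset ι := (Finset.range (M i)).attach.map emb with hFs_def
    have hprod := hindep.measure_inter_preimage_eq_mul Fs
      (sets := fun _ => Sᶜ) (fun _ _ => hS.compl)
    have hinter : (⋂ q ∈ Fs, (fun p : ι => T p.1.1 p.1.2) q ⁻¹' Sᶜ) = Eᶜ := by
      ext ω
      simp only [mem_iInter, mem_preimage, mem_compl_iff, hmemE, not_exists]
      constructor
      · rintro hω mm ⟨hmm, hcon⟩
        have hqmem : (⟨(i, mm), ⟨hi, hmm⟩⟩ : ι) ∈ Fs := by
          rw [hFs_def, Finset.mem_map]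
          exact ⟨⟨mm, Finset.mem_range.mpr hmm⟩, Finset.mem_attach _ _, rfl⟩
        exact hω _ hqmem ((hmemS _).1 hcon)
      · intro hω q hq
        rw [hFs_def, Finset.mem_map] at hq
        obtain ⟨a, -, rfl⟩ := hq
        intro hx
        exact hω a.1 ⟨Finset.mem_range.mp a.2, (hmemS _).2 hx⟩
    rw [hinter] at hprod
    rw [hprod]
    have heach : ∀ q ∈ Fs, volume ((fun p : ι => T p.1.1 p.1.2) q ⁻¹' Sᶜ) = 1 - P := by
      intro q hq
      rw [hFs_def, Finset.mem_map] at hq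
      obtain ⟨a, -, rfl⟩ := hq
      show volume (T i a.1 ⁻¹' Sᶜ) = 1 - P
      rw [Set.preimage_compl, prob_compl_eq_one_sub (hTmeas i a.1 hS),
        hPm a.1 (Finset.mem_range.mp a.2)]
    rw [Finset.prod_congr rfl heach, Finset.prod_const, hFs_def, Finset.card_map,
      Finset.card_attach, Finset.card_range]
  have hEvol : volume E = 1 - (1 - P) ^ (M i) := by
    have h1 : volume E = 1 - volume Eᶜ := by
      rw [← prob_compl_eq_one_sub hE.compl, compl_compl]
    rw [h1, hEc]
  have hint : ∫ ω, wInd M T i t h ω = (volume E).toReal := by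
    rw [hw, integral_indicator hE, setIntegral_const, smul_eq_mul, mul_one]; rfl
  rw [hint, hEvol]
  have hQ1 : (1 - P) ^ (M i) ≤ 1 := pow_le_one' tsub_le_self _
  rw [ENNReal.toReal_sub_of_le hQ1 ENNReal.one_ne_top, ENNReal.toReal_pow,
    ENNReal.toReal_sub_of_le hP1 ENNReal.one_ne_top, ENNReal.toReal_one]

/-! ### Bounds on the single-point hitting probability -/

lemma stmt8_pval_bounds (f : ℝ → ℝ) (CfL CfU : ℝ) (hCfL : 0 < CfL) (hCf : CfL ≤ CfU)
    (hfmeas : Measurable f)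
    (hfbd : ∀ t ∈ Icc (0:ℝ) 1, CfL ≤ f t ∧ f t ≤ CfU)
    (hfsupp : ∀ t, t ∉ Icc (0:ℝ) 1 → f t = 0)
    (hν1 : (volume.withDensity fun x => ENNReal.ofReal (f x)) univ = 1)
    (t h : ℝ) (ht : t ∈ Icc (0:ℝ) 1) (hh : h ∈ Ioc (0:ℝ) 1) :
    CfL * h ≤ ((volume.withDensity fun x => ENNReal.ofReal (f x)) (Icc (t-h) (t+h))).toReal ∧
    ((volume.withDensity fun x => ENNReal.ofReal (f x)) (Icc (t-h) (t+h))).toReal ≤ 1 ∧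
    ((volume.withDensity fun x => ENNReal.ofReal (f x)) (Icc (t-h) (t+h))).toReal ≤ CfU * (2*h) := by
  obtain ⟨ht0, ht1⟩ := ht
  obtain ⟨hh0, hh1⟩ := hh
  set ν := volume.withDensity (fun x => ENNReal.ofReal (f x)) with hν_def
  set S : Set ℝ := Icc (t-h) (t+h) with hS_def
  have hS : MeasurableSet S := measurableSet_Icc
  have hP1 : ν S ≤ 1 := by
    rw [← hν1]; exact measure_mono (subset_univ S)
  have hPtop : ν S ≠ ∞ := (lt_of_le_of_lt hP1 ENNReal.one_lt_top).ne
  have hSint : ν S = ∫⁻ x in S, ENNReal.ofReal (f x) := by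
    rw [hν_def, withDensity_apply _ hS]
  constructor
  · -- lower bound
    set A : Set ℝ := Icc (max (t-h) 0) (min (t+h) 1) with hA_def
    have hAS : A = S ∩ Icc 0 1 := by rw [hA_def, hS_def, Icc_inter_Icc]
    have hAsub : A ⊆ S := by rw [hAS]; exact inter_subset_left
    have hAsub01 : A ⊆ Icc 0 1 := by rw [hAS]; exact inter_subset_right
    have hAmeas : MeasurableSet A := measurableSet_Icc
    have hlen : h ≤ min (t+h) 1 - max (t-h) 0 := by
      rcases le_total (t-h) 0 with h2 | h2
      · rw [max_eq_right h2]
        rcases le_total (t+h) 1 with h1 | h1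
        · rw [min_eq_left h1]; linarith
        · rw [min_eq_right h1]; linarith
      · rw [max_eq_left h2]
        rcases le_total (t+h) 1 with h1 | h1
        · rw [min_eq_left h1]; linarith
        · rw [min_eq_right h1]; linarith
    have hstep1 : ENNReal.ofReal (CfL * h) ≤ ν A := by
      have h1 : ∫⁻ x in A, ENNReal.ofReal CfL ≤ ∫⁻ x in A, ENNReal.ofReal (f x) := by
        refine setLIntegral_mono' hAmeas (fun x hx => ?_)
        exact ENNReal.ofReal_le_ofReal (hfbd x (hAsub01 hx)).1
      have h2 : ∫⁻ x in A, ENNReal.ofReal CfL = ENNReal.ofReal CfL * volume A :=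
        setLIntegral_const A _
      have h3 : volume A = ENNReal.ofReal (min (t+h) 1 - max (t-h) 0) := Real.volume_Icc
      have h4 : ENNReal.ofReal (CfL * h) ≤ ENNReal.ofReal CfL * volume A := by
        rw [h3, ← ENNReal.ofReal_mul hCfL.le]
        exact ENNReal.ofReal_le_ofReal (by nlinarith)
      calc ENNReal.ofReal (CfL * h) ≤ ENNReal.ofReal CfL * volume A := h4
        _ = ∫⁻ x in A, ENNReal.ofReal CfL := h2.symm
        _ ≤ ∫⁻ x in A, ENNReal.ofReal (f x) := h1
        _ = ν A := (withDensity_apply _ hAmeas).symm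
    have := le_trans hstep1 (measure_mono hAsub)
    exact (ENNReal.ofReal_le_iff_le_toReal hPtop).1 this
  constructor
  · exact ENNReal.toReal_le_of_le_ofReal zero_le_one (by rwa [ENNReal.ofReal_one])
  · -- upper bound
    have hub : ∀ x : ℝ, ENNReal.ofReal (f x) ≤ ENNReal.ofReal CfU := by
      intro x
      refine ENNReal.ofReal_le_ofReal ?_
      by_cases hx : x ∈ Icc (0:ℝ) 1
      · exact (hfbd x hx).2
      · rw [hfsupp x hx]; linarith
    have h1 : ν S ≤ ENNReal.ofReal (CfU * (2*h)) := by
      rw [hSint]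
      calc ∫⁻ x in S, ENNReal.ofReal (f x) ≤ ∫⁻ _ in S, ENNReal.ofReal CfU :=
            setLIntegral_mono' hS (fun x _ => hub x)
        _ = ENNReal.ofReal CfU * volume S := setLIntegral_const S _
        _ = ENNReal.ofReal CfU * ENNReal.ofReal (t+h - (t-h)) := by rw [hS_def, Real.volume_Icc]
        _ = ENNReal.ofReal (CfU * (2*h)) := by
            rw [← ENNReal.ofReal_mul (by linarith)]
            congr 1
            ring
    exact ENNReal.toReal_le_of_le_ofReal (by nlinarith) h1

end Auxiliary

/-- there are constants `0 < b̲ ≤ b̄`, depending only on `CfL`,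
`CfU` and `C𝔪`, such that `b̲ N min(1, m h) ≤ E[𝒲_N(t;h)] ≤ b̄ N min(1, m h)`
for every design satisfying the independent-design assumptions, every `N, m ≥ 1`,
`h ∈ (0,1]` and `t ∈ [0,1]`. -/
theorem stmt8 (CfL CfU C𝔪 : ℝ) (hCfL : 0 < CfL) (hCf : CfL ≤ CfU) (hC𝔪 : 1 < C𝔪) :
    ∃ blo > (0:ℝ), ∃ bhi : ℝ, blo ≤ bhi ∧
      ∀ (Ω : Type) [MeasureSpace Ω] (f : ℝ → ℝ) (M : ℕ → ℕ)
        (T : ℕ → ℕ → Ω → ℝ) (N m : ℕ),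
        1 ≤ N → 1 ≤ m → IndepDesign Ω f M T N m CfL CfU C𝔪 →
        ∀ h ∈ Ioc (0:ℝ) 1, ∀ t ∈ Icc (0:ℝ) 1,
          blo * N * min 1 (m * h) ≤ (∫ ω, WNone M T N t h ω) ∧
          (∫ ω, WNone M T N t h ω) ≤ bhi * N * min 1 (m * h) := by
  have hC𝔪0 : (0:ℝ) < C𝔪 := by linarith
  have hCfU0 : (0:ℝ) < CfU := lt_of_lt_of_le hCfL hCf
  refine ⟨(1/2) * min 1 (CfL / C𝔪), ?_, max 1 (2*CfU*C𝔪), ?_, ?_⟩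
  · have : 0 < CfL / C𝔪 := div_pos hCfL hC𝔪0
    have : 0 < min 1 (CfL / C𝔪) := lt_min one_pos this
    linarith
  · have h1 : min 1 (CfL / C𝔪) ≤ 1 := min_le_left _ _
    have h2 : (1:ℝ) ≤ max 1 (2*CfU*C𝔪) := le_max_left _ _
    nlinarith
  intro Ω _ f M T N m hN hm hd h hh t ht
  obtain ⟨hprob, hMpos, hMbd, hfmeas, hfbd, hfsupp, hTmeas, hTmap, hindep⟩ := hd
  haveI := hprob
  have hN0 : 0 < N := hN
  -- the density integrates to 1
  have hν1 : (volume.withDensity fun x => ENNReal.ofReal (f x)) univ = 1 := by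
    rw [← hTmap 0 hN0 0 (hMpos 0 hN0)]
    haveI : IsProbabilityMeasure (Measure.map (T 0 0) volume) :=
      Measure.isProbabilityMeasure_map (hTmeas 0 0).aemeasurable
    exact measure_univ
  set p : ℝ := ((volume.withDensity fun x => ENNReal.ofReal (f x))
      (Icc (t-h) (t+h))).toReal with hp_def
  obtain ⟨hpl, hp1, hpu⟩ := stmt8_pval_bounds f CfL CfU hCfL hCf hfmeas hfbd hfsupp hν1 t h ht hh
  obtain ⟨hh0, hh1⟩ := hh
  have hp0 : 0 ≤ p := le_trans (by positivity) hpl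
  have hmh0 : 0 ≤ (m:ℝ) * h := mul_nonneg (Nat.cast_nonneg m) hh0.le
  -- per-observation bounds
  have hkey : ∀ i ∈ Finset.range N,
      (1/2) * min 1 (CfL / C𝔪) * min 1 (m * h) ≤ ∫ ω, wInd M T i t h ω ∧
      (∫ ω, wInd M T i t h ω) ≤ max 1 (2*CfU*C𝔪) * min 1 (m * h) := by
    intro i hi
    rw [Finset.mem_range] at hi
    have hexp := stmt8_expectation_wInd f M T N m CfL CfU C𝔪
      ⟨hprob, hMpos, hMbd, hfmeas, hfbd, hfsupp, hTmeas, hTmap, hindep⟩ i hi t h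
    rw [hexp, ← hp_def]
    obtain ⟨hKl, hKu⟩ := hMbd i hi
    have hK0 : (0:ℝ) ≤ (M i : ℝ) := Nat.cast_nonneg _
    constructor
    · -- lower bound
      have step1 : (CfL / C𝔪) * ((m:ℝ) * h) ≤ (M i : ℝ) * p := by
        have : (CfL / C𝔪) * ((m:ℝ) * h) = ((m:ℝ) / C𝔪) * (CfL * h) := by ring
        rw [this]
        exact mul_le_mul hKl hpl (by positivity) hK0
      have step2 : min 1 (CfL / C𝔪) * min 1 ((m:ℝ) * h) ≤ min 1 ((M i : ℝ) * p) := by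
        refine le_trans (stmt8_min_mul_lower _ _ (by positivity) hmh0) ?_
        exact min_le_min le_rfl step1
      have step3 := stmt8_aux_lower p (M i) hp0 hp1
      calc (1/2) * min 1 (CfL / C𝔪) * min 1 ((m:ℝ) * h)
          ≤ (1/2) * min 1 ((M i:ℝ) * p) := by nlinarith [step2]
        _ = (1/2) * min 1 ((M i : ℕ) * p) := by norm_num
        _ ≤ 1 - (1-p)^(M i) := step3
    · -- upper bound
      have step1 : (M i : ℝ) * p ≤ (2*CfU*C𝔪) * ((m:ℝ) * h) := by
        have heq : (2*CfU*C𝔪) * ((m:ℝ) * h) = (C𝔪 * m) * (CfU * (2*h)) := by ring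
        rw [heq]
        exact mul_le_mul hKu hpu hp0 (by positivity)
      calc 1 - (1-p)^(M i) ≤ min 1 ((M i : ℕ) * p) := stmt8_aux_upper p (M i) hp0 hp1
        _ ≤ min 1 ((2*CfU*C𝔪) * ((m:ℝ) * h)) := min_le_min le_rfl (by push_cast; exact step1)
        _ ≤ max 1 (2*CfU*C𝔪) * min 1 ((m:ℝ) * h) :=
            stmt8_min_mul_upper _ _ (by positivity) hmh0
  -- sum up
  have hintsum : ∫ ω, WNone M T N t h ω = ∑ i ∈ Finset.range N, ∫ ω, wInd M T i t h ω := by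
    simp only [WNone]
    exact integral_finset_sum _ (fun i _ => stmt8_wInd_integrable M T hTmeas i t h)
  rw [hintsum]
  constructor
  · calc (1/2) * min 1 (CfL / C𝔪) * (N:ℝ) * min 1 ((m:ℝ) * h)
        = ∑ _i ∈ Finset.range N, (1/2) * min 1 (CfL / C𝔪) * min 1 ((m:ℝ) * h) := by
          rw [Finset.sum_const, Finset.card_range, nsmul_eq_mul]; ring
      _ ≤ ∑ i ∈ Finset.range N, ∫ ω, wInd M T i t h ω :=
          Finset.sum_le_sum (fun i hi => (hkey i hi).1)
  · calc ∑ i ∈ Finset.range N, ∫ ω, wInd M T i t h ω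
        ≤ ∑ _i ∈ Finset.range N, max 1 (2*CfU*C𝔪) * min 1 ((m:ℝ) * h) :=
          Finset.sum_le_sum (fun i hi => (hkey i hi).2)
      _ = max 1 (2*CfU*C𝔪) * (N:ℝ) * min 1 ((m:ℝ) * h) := by
          rw [Finset.sum_const, Finset.card_range, nsmul_eq_mul]; ring
end
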